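/- For all a, b > 0 and all λ ≥ 0, ∫₀^∞ (exp(−x·g_b(λ)) − exp(−x/b)) ν̃_a(dx) = ∫₀^∞ e^{−λy} ν̃_{a+b}(dy); i.e., transporting the entrance rule ν̃_a by the transition kernel of the squared Bessel(0) diffusion (whose action on exponentials is x ↦ e^{−x·g_b(λ)}) and restricting to (0,∞) gives ν̃_{a+b}, expressed in Laplace-transform form (the subtracted term e^{−x/b} accounts for the atom at 0, since g_b(λ) → 1/b as λ → ∞). -/

import Mathlib

open MeasureTheory

/-- The family `g_a(x) = x / (1 + a x)`. -/
noncomputable def g (a x : ℝ) : ℝ := x / (1 + a * x)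

/-- The measure `ν̃_a` on `(0, ∞)` with density `y ↦ a⁻² e^(-y/a)` w.r.t. Lebesgue measure. -/
noncomputable def nuTilde (a : ℝ) : Measure ℝ :=
  (volume.restrict (Set.Ioi (0 : ℝ))).withDensity fun y =>
    ENNReal.ofReal (a⁻¹ ^ 2 * Real.exp (-y / a))

lemma integral_exp_neg_mul_Ioi {c : ℝ} (hc : 0 < c) :
    ∫ x in Set.Ioi (0:ℝ), Real.exp (-c * x) = 1 / c := by
  have h := integral_Ioi_of_hasDerivAt_of_tendsto'
    (f := fun x => -Real.exp (-c * x) / c) (f' := fun x => Real.exp (-c * x)) (a := 0)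
    (fun x _ => by
      simpa [hc.ne', mul_comm, neg_div, neg_neg, div_mul_eq_mul_div, mul_div_assoc]
        using ((hasDerivAt_id x).const_mul (-c)).exp.neg.div_const c)
    (exp_neg_integrableOn_Ioi 0 hc)
    (by
      have : Filter.Tendsto (fun x => -Real.exp (-c * x) / c) Filter.atTop (nhds (-0 / c)) :=
        (Filter.Tendsto.neg (Real.tendsto_exp_atBot.comp
          (Filter.tendsto_id.const_mul_atTop_of_neg (neg_neg_iff_pos.2 hc)))).div_const c
      simpa using this)
  rw [h]; simp [neg_div, one_div]

lemma nuTilde_integral (a : ℝ) (ha : 0 < a) (f : ℝ → ℝ) :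
    ∫ x, f x ∂(nuTilde a) =
      ∫ x in Set.Ioi (0:ℝ), a⁻¹ ^ 2 * Real.exp (-x / a) * f x := by
  rw [nuTilde,
    show (fun y => ENNReal.ofReal (a⁻¹ ^ 2 * Real.exp (-y / a))) =
      (fun y => ((Real.toNNReal (a⁻¹ ^ 2 * Real.exp (-y / a)) : NNReal) : ENNReal)) from rfl,
    integral_withDensity_eq_integral_smul (by fun_prop) f]
  congr 1 with x
  rw [NNReal.smul_def, smul_eq_mul, Real.coe_toNNReal]
  positivity

/-- For `a, b > 0` and `λ ≥ 0`,
`∫₀^∞ (exp (-x g_b(λ)) - exp (-x/b)) ν̃_a(dx) = ∫₀^∞ e^(-λ y) ν̃_{a+b}(dy)`: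
transporting the entrance rule `ν̃_a` by the transition kernel of the squared Bessel(0)
diffusion (whose action on exponentials is `x ↦ e^(-x g_b(λ))`) and restricting to `(0, ∞)`
gives `ν̃_{a+b}`, in Laplace-transform form (the subtracted term `e^(-x/b)` accounts for the
atom at `0`, since `g_b(λ) → 1/b` as `λ → ∞`). -/
theorem entrance_rule_g (a b : ℝ) (ha : 0 < a) (hb : 0 < b) (l : ℝ) (hl : 0 ≤ l) :
    ∫ x, (Real.exp (-x * g b l) - Real.exp (-x / b)) ∂(nuTilde a) =
      ∫ y, Real.exp (-l * y) ∂(nuTilde (a + b)) := by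
  have hab : 0 < a + b := by linarith
  have hbl : 0 < 1 + b * l := by positivity
  have hG : 0 ≤ g b l := by
    rw [g]; positivity
  set G := g b l with hGdef
  have hc1 : 0 < G + 1 / a := by positivity
  have hc2 : 0 < 1 / b + 1 / a := by positivity
  have hc3 : 0 < l + 1 / (a + b) := by positivity
  rw [nuTilde_integral a ha, nuTilde_integral (a + b) hab]
  have key : ∀ x : ℝ, a⁻¹ ^ 2 * Real.exp (-x / a) * (Real.exp (-x * G) - Real.exp (-x / b))
      = a⁻¹ ^ 2 * Real.exp (-(G + 1 / a) * x) - a⁻¹ ^ 2 * Real.exp (-(1 / b + 1 / a) * x) := by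
    intro x
    have h1 : -(G + 1 / a) * x = -x / a + -x * G := by ring
    have h2 : -(1 / b + 1 / a) * x = -x / a + -x / b := by ring
    rw [h1, h2, Real.exp_add, Real.exp_add]; ring
  have key2 : ∀ y : ℝ, (a + b)⁻¹ ^ 2 * Real.exp (-y / (a + b)) * Real.exp (-l * y)
      = (a + b)⁻¹ ^ 2 * Real.exp (-(l + 1 / (a + b)) * y) := by
    intro y
    have h3 : -(l + 1 / (a + b)) * y = -y / (a + b) + -l * y := by ring
    rw [h3, Real.exp_add]; ring
  simp only [key, key2]
  rw [integral_sub ((exp_neg_integrableOn_Ioi 0 hc1).const_mul _)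
      ((exp_neg_integrableOn_Ioi 0 hc2).const_mul _),
    integral_const_mul, integral_const_mul, integral_const_mul,
    integral_exp_neg_mul_Ioi hc1, integral_exp_neg_mul_Ioi hc2, integral_exp_neg_mul_Ioi hc3]
  rw [hGdef, g]
  field_simp
  ring
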